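/- Let Y be a GEV-distributed random variable with parameters (τ₀, μ₀, ξ₀) where τ₀ > 0 and ξ₀ ≠ 0, and set w = 1 + ξ₀(Y - μ₀)/τ₀. Then for any real α with α·ξ₀ + 1 > 0 and any nonnegative integer b, E[w^{-α}·(log w)^b] = (-ξ₀)^b · Γ^{(b)}(α·ξ₀ + 1), where Γ^{(b)} is the b-th derivative of the Gamma function. -/

import Mathlib

open MeasureTheory

section Aux
open Set Real Filter

/-! ### Auxiliary lemmas: integrability and derivatives of Gamma-type integrals -/

lemma abs_log_le_rpow {a ε : ℝ} (ha : 0 < a) (hε : 0 < ε) :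
    |Real.log a| ≤ (a ^ ε + a ^ (-ε)) / ε := by
  rcases le_or_gt 1 a with h | h
  · rw [abs_of_nonneg (Real.log_nonneg h)]
    refine (Real.log_le_rpow_div ha.le hε).trans ?_
    gcongr
    · exact le_add_of_nonneg_right (Real.rpow_nonneg ha.le _)
  · rw [abs_of_nonpos (Real.log_nonpos ha.le h.le), ← Real.log_inv]
    refine (Real.log_le_rpow_div (by positivity) hε).trans ?_
    rw [← Real.rpow_neg_one a, ← Real.rpow_mul ha.le, neg_one_mul]
    gcongr
    exact le_add_of_nonneg_left (Real.rpow_nonneg ha.le _)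

lemma abs_log_pow_le {a ε : ℝ} (k : ℕ) (ha : 0 < a) (hε : 0 < ε) :
    |Real.log a| ^ k ≤ (2 / ε) ^ k * (a ^ ((k : ℝ) * ε) + a ^ (-((k : ℝ) * ε))) := by
  have h1 : |Real.log a| ^ k ≤ ((a ^ ε + a ^ (-ε)) / ε) ^ k :=
    pow_le_pow_left₀ (abs_nonneg _) (abs_log_le_rpow ha hε) k
  refine h1.trans ?_
  rw [div_pow]
  have h2 : (a ^ ε + a ^ (-ε)) ^ k ≤ 2 ^ k * ((a ^ ε) ^ k + (a ^ (-ε)) ^ k) := by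
    have hm : a ^ ε + a ^ (-ε) ≤ 2 * max (a ^ ε) (a ^ (-ε)) := by
      rw [two_mul]
      exact add_le_add (le_max_left _ _) (le_max_right _ _)
    calc (a ^ ε + a ^ (-ε)) ^ k ≤ (2 * max (a ^ ε) (a ^ (-ε))) ^ k := by
          apply pow_le_pow_left₀ (by positivity) hm
      _ = 2 ^ k * (max (a ^ ε) (a ^ (-ε))) ^ k := by rw [mul_pow]
      _ ≤ 2 ^ k * ((a ^ ε) ^ k + (a ^ (-ε)) ^ k) := by
          gcongr
          rcases max_cases (a ^ ε) (a ^ (-ε)) with ⟨h, _⟩ | ⟨h, _⟩ <;> rw [h]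
          · exact le_add_of_nonneg_right (by positivity)
          · exact le_add_of_nonneg_left (by positivity)
  have h3 : (a ^ ε) ^ k = a ^ ((k : ℝ) * ε) := by
    rw [← Real.rpow_natCast (a ^ ε) k, ← Real.rpow_mul ha.le, mul_comm]
  have h4 : (a ^ (-ε)) ^ k = a ^ (-((k : ℝ) * ε)) := by
    rw [← Real.rpow_natCast (a ^ (-ε)) k, ← Real.rpow_mul ha.le]
    ring_nf
  calc (a ^ ε + a ^ (-ε)) ^ k / ε ^ k ≤ 2 ^ k * ((a ^ ε) ^ k + (a ^ (-ε)) ^ k) / ε ^ k := by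
        gcongr
    _ = (2 / ε) ^ k * (a ^ ((k : ℝ) * ε) + a ^ (-((k : ℝ) * ε))) := by
        rw [h3, h4, div_pow]; ring

lemma integrableOn_rpow_abs_log_exp (k : ℕ) {t : ℝ} (ht : 0 < t) :
    IntegrableOn (fun a => a ^ (t - 1) * |Real.log a| ^ k * Real.exp (-a)) (Set.Ioi (0:ℝ)) := by
  set ε : ℝ := t / (2 * (k + 1)) with hε_def
  have hε : 0 < ε := by positivity
  set δ : ℝ := (k : ℝ) * ε with hδ_def
  have hδ0 : 0 ≤ δ := by positivity
  have hδle : δ ≤ t / 2 := by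
    have hk0 : (0:ℝ) ≤ (k : ℝ) := Nat.cast_nonneg k
    have hkey : δ * (2 * ((k:ℝ) + 1)) = (k:ℝ) * t := by
      rw [hδ_def, hε_def]; field_simp
    nlinarith [hδ0, ht.le]
  have h1 : IntegrableOn (fun a => Real.exp (-a) * a ^ ((t + δ) - 1)) (Set.Ioi (0:ℝ)) :=
    Real.GammaIntegral_convergent (by linarith)
  have h2 : IntegrableOn (fun a => Real.exp (-a) * a ^ ((t - δ) - 1)) (Set.Ioi (0:ℝ)) :=
    Real.GammaIntegral_convergent (by linarith)
  have hbi : Integrable (fun a => (2 / ε) ^ k *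
      (Real.exp (-a) * a ^ ((t + δ) - 1) + Real.exp (-a) * a ^ ((t - δ) - 1)))
      (volume.restrict (Set.Ioi (0:ℝ))) := ((h1.add h2).const_mul _)
  refine Integrable.mono' hbi ?_ ?_
  · refine Measurable.aestronglyMeasurable ?_
    have hm : Measurable fun a : ℝ => a ^ (t - 1) := by fun_prop
    exact (hm.mul ((Real.measurable_log.abs).pow_const k)).mul (by fun_prop)
  · rw [ae_restrict_iff' measurableSet_Ioi]
    refine Filter.Eventually.of_forall fun a ha => ?_
    have ha' : 0 < a := ha
    rw [Real.norm_eq_abs, abs_of_nonneg (by positivity)]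
    calc a ^ (t - 1) * |Real.log a| ^ k * Real.exp (-a)
        ≤ a ^ (t - 1) * ((2 / ε) ^ k * (a ^ δ + a ^ (-δ))) * Real.exp (-a) :=
          mul_le_mul_of_nonneg_right (mul_le_mul_of_nonneg_left
            (abs_log_pow_le k ha' hε) (by positivity)) (by positivity)
      _ = (2 / ε) ^ k * (Real.exp (-a) * (a ^ (t-1) * a ^ δ) +
            Real.exp (-a) * (a ^ (t-1) * a ^ (-δ))) := by ring
      _ = (2 / ε) ^ k * (Real.exp (-a) * a ^ ((t + δ) - 1) +
            Real.exp (-a) * a ^ ((t - δ) - 1)) := by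
          rw [← Real.rpow_add ha', ← Real.rpow_add ha']
          ring_nf

/-- The `b`-th "Gamma-type" integral `∫_0^∞ s^(t-1) (log s)^b e^(-s) ds`. -/
noncomputable def Gb (b : ℕ) (t : ℝ) : ℝ :=
  ∫ s in Set.Ioi (0:ℝ), s ^ (t - 1) * Real.log s ^ b * Real.exp (-s)

lemma measurable_Gb_integrand (b : ℕ) (t : ℝ) :
    Measurable fun s : ℝ => s ^ (t - 1) * Real.log s ^ b * Real.exp (-s) := by
  have hm : Measurable fun a : ℝ => a ^ (t - 1) := by fun_prop
  exact (hm.mul (Real.measurable_log.pow_const b)).mul (by fun_prop)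

lemma integrableOn_Gb (b : ℕ) {t : ℝ} (ht : 0 < t) :
    IntegrableOn (fun s => s ^ (t - 1) * Real.log s ^ b * Real.exp (-s)) (Set.Ioi (0:ℝ)) := by
  refine Integrable.mono' (integrableOn_rpow_abs_log_exp b ht)
    (measurable_Gb_integrand b t).aestronglyMeasurable ?_
  rw [ae_restrict_iff' measurableSet_Ioi]
  refine Filter.Eventually.of_forall fun a ha => ?_
  have ha' : (0:ℝ) < a := ha
  rw [Real.norm_eq_abs, abs_mul, abs_mul, abs_pow, abs_of_nonneg (Real.rpow_nonneg ha'.le _),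
    abs_of_nonneg (Real.exp_nonneg _)]

lemma hasDerivAt_Gb (b : ℕ) {t : ℝ} (ht : 0 < t) : HasDerivAt (Gb b) (Gb (b + 1) t) t := by
  have key := hasDerivAt_integral_of_dominated_loc_of_deriv_le
    (μ := volume.restrict (Set.Ioi (0:ℝ)))
    (F := fun (x : ℝ) (a : ℝ) => a ^ (x - 1) * Real.log a ^ b * Real.exp (-a))
    (F' := fun (x : ℝ) (a : ℝ) => a ^ (x - 1) * Real.log a ^ (b + 1) * Real.exp (-a))
    (x₀ := t)
    (bound := fun a => a ^ (t / 2 - 1) * |Real.log a| ^ (b + 1) * Real.exp (-a)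
      + a ^ (3 * t / 2 - 1) * |Real.log a| ^ (b + 1) * Real.exp (-a))
    (Metric.ball_mem_nhds t (half_pos ht))
    (Filter.Eventually.of_forall fun x => (measurable_Gb_integrand b x).aestronglyMeasurable)
    (integrableOn_Gb b ht)
    ((measurable_Gb_integrand (b + 1) t).aestronglyMeasurable)
    ?_ ?_ ?_
  · exact key.2
  · rw [ae_restrict_iff' measurableSet_Ioi]
    refine Filter.Eventually.of_forall fun a ha => ?_
    intro x hx
    have ha' : (0:ℝ) < a := ha
    rw [Real.ball_eq_Ioo] at hx
    obtain ⟨hx1, hx2⟩ := hx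
    have hb : a ^ (x - 1) ≤ a ^ (t / 2 - 1) + a ^ (3 * t / 2 - 1) := by
      rcases le_or_gt 1 a with h | h
      · refine le_add_of_nonneg_of_le (by positivity) ?_
        exact Real.rpow_le_rpow_of_exponent_le h (by linarith)
      · refine le_add_of_le_of_nonneg ?_ (by positivity)
        exact Real.rpow_le_rpow_of_exponent_ge ha' h.le (by linarith)
    rw [Real.norm_eq_abs, abs_mul, abs_mul, abs_pow, abs_of_nonneg (Real.rpow_nonneg ha'.le _),
      abs_of_nonneg (Real.exp_nonneg _)]
    calc a ^ (x - 1) * |Real.log a| ^ (b + 1) * Real.exp (-a)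
        ≤ (a ^ (t / 2 - 1) + a ^ (3 * t / 2 - 1)) * |Real.log a| ^ (b + 1) * Real.exp (-a) :=
          mul_le_mul_of_nonneg_right (mul_le_mul_of_nonneg_right hb (by positivity))
            (by positivity)
      _ = _ := by ring
  · exact (integrableOn_rpow_abs_log_exp (b + 1) (by linarith)).add
      (integrableOn_rpow_abs_log_exp (b + 1) (by linarith))
  · rw [ae_restrict_iff' measurableSet_Ioi]
    refine Filter.Eventually.of_forall fun a ha => ?_
    intro x hx
    have ha' : (0:ℝ) < a := ha
    have hd : HasDerivAt (fun x : ℝ => a ^ (x - 1)) (a ^ (x - 1) * Real.log a) x := by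
      have h1 := (Real.hasStrictDerivAt_const_rpow ha' (x - 1)).hasDerivAt
      have h2 : HasDerivAt (fun x : ℝ => x - 1) 1 x := (hasDerivAt_id x).sub_const 1
      simpa [Function.comp_def] using h1.comp x h2
    have := hd.mul_const (Real.log a ^ b * Real.exp (-a))
    convert this using 1
    · ext x; ring
    · ext x; ring
    · ring

lemma iteratedDeriv_Gamma_eq_Gb (b : ℕ) :
    ∀ {t : ℝ}, 0 < t → iteratedDeriv b Real.Gamma t = Gb b t := by
  induction b with
  | zero =>
    intro t ht
    rw [iteratedDeriv_zero, Real.Gamma_eq_integral ht]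
    exact integral_congr_ae (Filter.Eventually.of_forall fun x => by simp [mul_comm])
  | succ b ih =>
    intro t ht
    rw [iteratedDeriv_succ]
    have hev : iteratedDeriv b Real.Gamma =ᶠ[nhds t] Gb b := by
      filter_upwards [isOpen_Ioi.mem_nhds (Set.mem_Ioi.mpr ht)] with s hs
      exact ih hs
    rw [hev.deriv_eq, (hasDerivAt_Gb b ht).deriv]

/-! ### Auxiliary lemmas: the standard exponential measure and the GEV quantile transform -/

lemma rpow_cancel {c ξ : ℝ} (hc : 0 < c) (hξ : ξ ≠ 0) : (c ^ (-1 / ξ)) ^ (-ξ) = c := by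
  rw [← Real.rpow_mul hc.le, show -1 / ξ * -ξ = 1 by field_simp, Real.rpow_one]

lemma rpow_neg_le_iff {s c ξ : ℝ} (hs : 0 < s) (hc : 0 < c) (hξ : 0 < ξ) :
    s ^ (-ξ) ≤ c ↔ c ^ (-1 / ξ) ≤ s := by
  conv_lhs => rw [← rpow_cancel hc hξ.ne']
  exact Real.rpow_le_rpow_iff_of_neg hs (Real.rpow_pos_of_pos hc _) (neg_neg_iff_pos.mpr hξ)

lemma le_rpow_neg_iff {s c ξ : ℝ} (hs : 0 < s) (hc : 0 < c) (hξ : ξ < 0) :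
    c ≤ s ^ (-ξ) ↔ c ^ (-1 / ξ) ≤ s := by
  conv_lhs => rw [← rpow_cancel hc hξ.ne]
  exact Real.rpow_le_rpow_iff (Real.rpow_pos_of_pos hc _).le hs.le (by linarith)

/-- The standard exponential measure on `(0, ∞)`. -/
noncomputable def expM : Measure ℝ :=
  (volume.restrict (Set.Ioi 0)).withDensity fun s => ENNReal.ofReal (Real.exp (-s))

lemma expM_apply {A : Set ℝ} (hA : MeasurableSet A) :
    expM A = ∫⁻ s in A ∩ Set.Ioi 0, ENNReal.ofReal (Real.exp (-s)) := by
  rw [expM, withDensity_apply _ hA, Measure.restrict_restrict hA]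

lemma lint_exp_Ioi (r : ℝ) :
    ∫⁻ s in Set.Ioi r, ENNReal.ofReal (Real.exp (-s)) = ENNReal.ofReal (Real.exp (-r)) := by
  rw [← ofReal_integral_eq_lintegral_ofReal (integrableOn_exp_neg_Ioi r)
    (Filter.Eventually.of_forall fun x => (Real.exp_nonneg _))]
  rw [integral_exp_neg_Ioi]

lemma lint_exp_Ici (r : ℝ) :
    ∫⁻ s in Set.Ici r, ENNReal.ofReal (Real.exp (-s)) = ENNReal.ofReal (Real.exp (-r)) := by
  rw [setLIntegral_congr (Ioi_ae_eq_Ici (a := r)).symm, lint_exp_Ioi]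

instance : IsProbabilityMeasure expM := by
  constructor
  rw [expM_apply MeasurableSet.univ, Set.univ_inter, lint_exp_Ioi]
  simp

/-- The inverse transform carrying the standard exponential onto the GEV distribution. -/
noncomputable def gevInv (τ₀ μ₀ ξ₀ : ℝ) (s : ℝ) : ℝ := μ₀ + τ₀ * (s ^ (-ξ₀) - 1) / ξ₀

lemma measurable_gevInv (τ₀ μ₀ ξ₀ : ℝ) : Measurable (gevInv τ₀ μ₀ ξ₀) := by
  unfold gevInv; fun_prop

lemma gevInv_le_iff {τ₀ μ₀ ξ₀ : ℝ} (hτ : 0 < τ₀) (hξ : ξ₀ ≠ 0) (y s : ℝ) :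
    gevInv τ₀ μ₀ ξ₀ s ≤ y ↔
      (if 0 < ξ₀ then s ^ (-ξ₀) ≤ 1 + ξ₀ * (y - μ₀) / τ₀
       else 1 + ξ₀ * (y - μ₀) / τ₀ ≤ s ^ (-ξ₀)) := by
  set c := 1 + ξ₀ * (y - μ₀) / τ₀ with hc_def
  set u := s ^ (-ξ₀) with hu_def
  have hq : c - u = (y - gevInv τ₀ μ₀ ξ₀ s) * (ξ₀ / τ₀) := by
    rw [hc_def, hu_def, gevInv]; field_simp; ring
  split_ifs with hpos
  · have hq2 : 0 < ξ₀ / τ₀ := div_pos hpos hτ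
    constructor
    · intro hh
      have h3 : 0 ≤ c - u := hq ▸ mul_nonneg (sub_nonneg.2 hh) hq2.le
      linarith
    · intro hh
      by_contra hcon
      push_neg at hcon
      have h3 : c - u < 0 := hq ▸ mul_neg_of_neg_of_pos (by linarith) hq2
      linarith
  · have hneg : ξ₀ < 0 := lt_of_le_of_ne (not_lt.mp hpos) hξ
    have hq2 : ξ₀ / τ₀ < 0 := div_neg_of_neg_of_pos hneg hτ
    constructor
    · intro hh
      have h3 : c - u ≤ 0 := hq ▸ mul_nonpos_of_nonneg_of_nonpos (sub_nonneg.2 hh) hq2.le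
      linarith
    · intro hh
      by_contra hcon
      push_neg at hcon
      have h3 : 0 < c - u := hq ▸ mul_pos_of_neg_of_neg (by linarith) hq2
      linarith

end Aux

/-- CDF of the generalized extreme value distribution with parameters `(τ₀, μ₀, ξ₀)`, `ξ₀ ≠ 0`. -/
noncomputable def gevCDF (τ₀ μ₀ ξ₀ : ℝ) (y : ℝ) : ℝ :=
  if 0 < 1 + ξ₀ * (y - μ₀) / τ₀ then
    Real.exp (-(1 + ξ₀ * (y - μ₀) / τ₀) ^ (-1 / ξ₀))
  else if 0 < ξ₀ then 0 else 1

open Set Real Filter in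
lemma expM_map_Iic {τ₀ μ₀ ξ₀ : ℝ} (hτ : 0 < τ₀) (hξ : ξ₀ ≠ 0) (y : ℝ) :
    (expM.map (gevInv τ₀ μ₀ ξ₀)) (Set.Iic y) = ENNReal.ofReal (gevCDF τ₀ μ₀ ξ₀ y) := by
  rw [Measure.map_apply (measurable_gevInv τ₀ μ₀ ξ₀) measurableSet_Iic,
    expM_apply ((measurable_gevInv τ₀ μ₀ ξ₀) measurableSet_Iic)]
  set c := 1 + ξ₀ * (y - μ₀) / τ₀ with hc_def
  rw [gevCDF]
  by_cases hc : 0 < c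
  · rw [if_pos hc]
    have hset : gevInv τ₀ μ₀ ξ₀ ⁻¹' Set.Iic y ∩ Set.Ioi 0 = Set.Ici (c ^ (-1 / ξ₀)) := by
      have hr : 0 < c ^ (-1 / ξ₀) := Real.rpow_pos_of_pos hc _
      ext s
      simp only [Set.mem_inter_iff, Set.mem_preimage, Set.mem_Iic, Set.mem_Ioi, Set.mem_Ici]
      constructor
      · rintro ⟨h1, h2⟩
        rw [gevInv_le_iff hτ hξ] at h1
        rcases lt_or_gt_of_ne hξ with hneg | hpos
        · rw [if_neg (not_lt.mpr hneg.le)] at h1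
          exact (le_rpow_neg_iff h2 hc hneg).mp h1
        · rw [if_pos hpos] at h1
          exact (rpow_neg_le_iff h2 hc hpos).mp h1
      · intro h1
        have h2 : (0:ℝ) < s := lt_of_lt_of_le hr h1
        refine ⟨?_, h2⟩
        rw [gevInv_le_iff hτ hξ]
        rcases lt_or_gt_of_ne hξ with hneg | hpos
        · rw [if_neg (not_lt.mpr hneg.le)]
          exact (le_rpow_neg_iff h2 hc hneg).mpr h1
        · rw [if_pos hpos]
          exact (rpow_neg_le_iff h2 hc hpos).mpr h1
    rw [hset, lint_exp_Ici]
  · rw [if_neg hc]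
    rcases lt_or_gt_of_ne hξ with hneg | hpos
    · rw [if_neg (not_lt.mpr hneg.le)]
      have hset : gevInv τ₀ μ₀ ξ₀ ⁻¹' Set.Iic y ∩ Set.Ioi 0 = Set.Ioi 0 := by
        ext s
        simp only [Set.mem_inter_iff, Set.mem_preimage, Set.mem_Iic, Set.mem_Ioi,
          and_iff_right_iff_imp]
        intro hs
        rw [gevInv_le_iff hτ hξ, if_neg (not_lt.mpr hneg.le)]
        exact (not_lt.mp hc).trans (Real.rpow_pos_of_pos hs _).le
      rw [hset, lint_exp_Ioi]
      simp
    · rw [if_pos hpos]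
      have hset : gevInv τ₀ μ₀ ξ₀ ⁻¹' Set.Iic y ∩ Set.Ioi 0 = (∅ : Set ℝ) := by
        ext s
        simp only [Set.mem_inter_iff, Set.mem_preimage, Set.mem_Iic, Set.mem_Ioi,
          Set.mem_empty_iff_false, iff_false, not_and]
        intro h1 hs
        rw [gevInv_le_iff hτ hξ, if_pos hpos] at h1
        exact absurd (h1.trans (not_lt.mp hc)) (not_le.mpr (Real.rpow_pos_of_pos hs _))
      rw [hset]
      simp

theorem gev_moment_formula {Ω : Type*} [MeasurableSpace Ω] (P : Measure Ω)
    [IsProbabilityMeasure P] (τ₀ μ₀ ξ₀ : ℝ) (hτ : 0 < τ₀) (hξ : ξ₀ ≠ 0)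
    (Y : Ω → ℝ) (hY : Measurable Y)
    (hcdf : ∀ y : ℝ, (P {ω | Y ω ≤ y}).toReal = gevCDF τ₀ μ₀ ξ₀ y)
    (α : ℝ) (hα : 0 < α * ξ₀ + 1) (b : ℕ) :
    ∫ ω, (1 + ξ₀ * (Y ω - μ₀) / τ₀) ^ (-α) *
        Real.log (1 + ξ₀ * (Y ω - μ₀) / τ₀) ^ b ∂P =
      (-ξ₀) ^ b * iteratedDeriv b Real.Gamma (α * ξ₀ + 1) := by
  set t : ℝ := α * ξ₀ + 1 with ht_def
  set g : ℝ → ℝ := fun y =>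
    (1 + ξ₀ * (y - μ₀) / τ₀) ^ (-α) * Real.log (1 + ξ₀ * (y - μ₀) / τ₀) ^ b with hg_def
  have h1 : Measurable fun y : ℝ => 1 + ξ₀ * (y - μ₀) / τ₀ := by fun_prop
  have h2 : Measurable fun p : ℝ => p ^ (-α) := by fun_prop
  have hg : Measurable g := (h2.comp h1).mul ((Real.measurable_log.comp h1).pow_const b)
  have hmap : P.map Y = expM.map (gevInv τ₀ μ₀ ξ₀) := by
    haveI : IsProbabilityMeasure (P.map Y) := Measure.isProbabilityMeasure_map hY.aemeasurable
    refine MeasureTheory.Measure.ext_of_Iic _ _ fun y => ?_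
    rw [expM_map_Iic hτ hξ y, Measure.map_apply hY measurableSet_Iic]
    have hpre : Y ⁻¹' Set.Iic y = {ω | Y ω ≤ y} := rfl
    rw [hpre, ← hcdf y, ENNReal.ofReal_toReal (measure_ne_top P _)]
  have hdens : Measurable fun s : ℝ => Real.toNNReal (Real.exp (-s)) := by
    exact (Real.measurable_exp.comp measurable_neg).real_toNNReal
  calc ∫ ω, (1 + ξ₀ * (Y ω - μ₀) / τ₀) ^ (-α) *
          Real.log (1 + ξ₀ * (Y ω - μ₀) / τ₀) ^ b ∂P
      = ∫ y, g y ∂(P.map Y) := (integral_map hY.aemeasurable hg.aestronglyMeasurable).symm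
    _ = ∫ y, g y ∂(expM.map (gevInv τ₀ μ₀ ξ₀)) := by rw [hmap]
    _ = ∫ s, g (gevInv τ₀ μ₀ ξ₀ s) ∂expM :=
        integral_map (measurable_gevInv τ₀ μ₀ ξ₀).aemeasurable hg.aestronglyMeasurable
    _ = ∫ s in Set.Ioi (0:ℝ), Real.toNNReal (Real.exp (-s)) • g (gevInv τ₀ μ₀ ξ₀ s) := by
        rw [expM]
        exact integral_withDensity_eq_integral_smul hdens _
    _ = ∫ s in Set.Ioi (0:ℝ), (-ξ₀) ^ b * (s ^ (t - 1) * Real.log s ^ b * Real.exp (-s)) := by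
        refine setIntegral_congr_fun measurableSet_Ioi fun s hs => ?_
        have hs' : (0:ℝ) < s := hs
        have hw : 1 + ξ₀ * (gevInv τ₀ μ₀ ξ₀ s - μ₀) / τ₀ = s ^ (-ξ₀) := by
          rw [gevInv]; field_simp; ring
        have hval : g (gevInv τ₀ μ₀ ξ₀ s)
            = s ^ (t - 1) * ((-ξ₀) ^ b * Real.log s ^ b) := by
          rw [hg_def]
          simp only
          rw [hw, ← Real.rpow_mul hs'.le, Real.log_rpow hs', mul_pow,
            show -ξ₀ * -α = t - 1 by rw [ht_def]; ring]
        rw [hval, NNReal.smul_def, Real.coe_toNNReal _ (Real.exp_nonneg _), smul_eq_mul]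
        ring
    _ = (-ξ₀) ^ b * Gb b t := by
        rw [Gb, integral_const_mul]
    _ = (-ξ₀) ^ b * iteratedDeriv b Real.Gamma t := by
        rw [iteratedDeriv_Gamma_eq_Gb b hα]
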